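/- Let m, k ≥ 1, let d_1 ≥ d_2 ≥ ... ≥ d_k ≥ 0 be real delays, and let w_1, ..., w_k be natural numbers, not all zero. Then the minimum of D_T(A) over all binary matrices A (with any number m of rows) whose j-th column contains at least w_j ones for every j ∈ {1,...,k} equals Σ_{j=1}^k d_j · max{0, w_j − max{w_{j'} : 0 ≤ j' < j}}, where by convention w_0 = 0. -/
import Mathlib

open Finset


/-- The delay of row `i` of a binary matrix `A`: the maximum of `d j` over the
columns `j` where `A i j = 1`, with the empty maximum taken to be `0`. -/
def rowDelay {m k : ℕ} (d : Fin k → ℝ) (A : Fin m → Fin k → Bool) (i : Fin m) : ℝ :=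
  (Finset.univ.filter (fun j => A i j = true)).fold max 0 d

/-- The total delay of a binary matrix `A`: the sum of the row delays. -/
def totalDelay {m k : ℕ} (d : Fin k → ℝ) (A : Fin m → Fin k → Bool) : ℝ :=
  ∑ i, rowDelay d A i

/-- The weight of column `j` of a binary matrix `A`: the number of its 1-entries. -/
def colWeight {m k : ℕ} (A : Fin m → Fin k → Bool) (j : Fin k) : ℕ :=
  (Finset.univ.filter (fun i => A i j = true)).card


section aux
variable {k : ℕ}

/-- extension of `d` by 0 -/
noncomputable def Dext (d : Fin k → ℝ) : ℕ → ℝ := fun n => if h : n < k then d ⟨n, h⟩ else 0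
/-- extension of `w` by 0 -/
def wext (w : Fin k → ℕ) : ℕ → ℕ := fun n => if h : n < k then w ⟨n, h⟩ else 0
noncomputable def dstep (d : Fin k → ℝ) : ℕ → ℝ := fun t => Dext d t - Dext d (t + 1)
def Cee (w : Fin k → ℕ) : ℕ → ℕ := fun t => (range (t + 1)).sup (wext w)

theorem dstep_nonneg {d : Fin k → ℝ} (hd0 : ∀ j, 0 ≤ d j) (hdanti : Antitone d) (t : ℕ) :
    0 ≤ dstep d t := by
  unfold dstep Dext
  split_ifs with h1 h2 h2
  · exact sub_nonneg.2 (hdanti (by simp [Fin.le_def]))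
  · simpa using hd0 ⟨t, h1⟩
  · omega
  · simp

theorem sum_Ico_dstep (d : Fin k → ℝ) {a : ℕ} (ha : a ≤ k) :
    ∑ t ∈ Ico a k, dstep d t = Dext d a := by
  have : ∑ t ∈ Ico a k, dstep d t = ∑ t ∈ range (k - a), dstep d (a + t) := by
    rw [Finset.sum_Ico_eq_sum_range]
  rw [this]
  have := Finset.sum_range_sub' (fun t => Dext d (a + t)) (k - a)
  simp only [add_zero] at this
  unfold dstep
  have h2 : ∀ t, Dext d (a + t + 1) = Dext d (a + (t+1)) := by intro t; ring_nf
  calc ∑ t ∈ range (k - a), (Dext d (a + t) - Dext d (a + t + 1))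
      = ∑ t ∈ range (k - a), (Dext d (a + t) - Dext d (a + (t+1))) := by
        refine Finset.sum_congr rfl fun t _ => by rw [h2]
    _ = Dext d a - Dext d (a + (k - a)) := this
    _ = Dext d a := by
        have : a + (k - a) = k := by omega
        rw [this]; unfold Dext; simp

theorem filter_ge_range (a k : ℕ) : (range k).filter (fun t => a ≤ t) = Ico a k := by
  ext t; simp [Finset.mem_Ico, and_comm]

theorem filter_le_range {t k : ℕ} (ht : t < k) :
    (range k).filter (fun n => n ≤ t) = range (t + 1) := by
  ext n; simp only [mem_filter, mem_range]; omega

/-- partial sums of the increments equal the running max -/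
theorem sum_incr (w : Fin k → ℕ) (N : ℕ) :
    ∑ n ∈ range N, (wext w n - (range n).sup (wext w)) = (range N).sup (wext w) := by
  induction N with
  | zero => simp
  | succ N ih =>
      rw [Finset.sum_range_succ, ih, Finset.range_add_one, Finset.sup_insert]
      rw [add_tsub_eq_max]
      exact (max_comm _ _)

theorem wext_val (w : Fin k → ℕ) (j : Fin k) : wext w j.val = w j := by
  unfold wext; rw [dif_pos j.isLt]

theorem Dext_val (d : Fin k → ℝ) (j : Fin k) : Dext d j.val = d j := by
  unfold Dext; rw [dif_pos j.isLt]

/-- the `Fin` filter sup equals the `ℕ` range sup -/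
theorem sup_filter_lt (w : Fin k → ℕ) (j : Fin k) :
    ((univ : Finset (Fin k)).filter (fun j' => j' < j)).sup w = (range j.val).sup (wext w) := by
  apply le_antisymm
  · apply Finset.sup_le
    intro j' hj'
    simp only [mem_filter, mem_univ, true_and] at hj'
    rw [← wext_val w j']
    exact Finset.le_sup (Finset.mem_range.mpr (Fin.lt_def.mp hj'))
  · apply Finset.sup_le
    intro n hn
    simp only [mem_range] at hn
    have hnk : n < k := lt_trans hn j.isLt
    have : wext w n = w ⟨n, hnk⟩ := by unfold wext; rw [dif_pos hnk]
    rw [this]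
    exact Finset.le_sup (by simp only [mem_filter, mem_univ, true_and, Fin.lt_def]; exact hn)

/-- the key Abel-type identity: target sum in terms of steps and running maxes -/
theorem target_eq (d : Fin k → ℝ) (w : Fin k → ℕ) :
    (∑ j : Fin k,
        d j * ((w j - (Finset.univ.filter (fun j' => j' < j)).sup w : ℕ) : ℝ)) =
    ∑ t ∈ range k, dstep d t * (Cee w t : ℝ) := by
  have h1 : (∑ j : Fin k,
        d j * ((w j - (Finset.univ.filter (fun j' => j' < j)).sup w : ℕ) : ℝ)) =
      ∑ n ∈ range k, Dext d n * ((wext w n - (range n).sup (wext w) : ℕ) : ℝ) := by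
    rw [← Fin.sum_univ_eq_sum_range (fun n => Dext d n * ((wext w n - (range n).sup (wext w) : ℕ) : ℝ))]
    refine Finset.sum_congr rfl fun j _ => ?_
    rw [sup_filter_lt, wext_val, Dext_val]
  rw [h1]
  have h2 : ∀ n ∈ range k, Dext d n * ((wext w n - (range n).sup (wext w) : ℕ) : ℝ) =
      ∑ t ∈ range k, (if n ≤ t then dstep d t * ((wext w n - (range n).sup (wext w) : ℕ) : ℝ) else 0) := by
    intro n hn
    simp only [mem_range] at hn
    rw [← Finset.sum_filter, filter_ge_range]
    rw [← Finset.sum_mul, sum_Ico_dstep d (le_of_lt hn)]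
  rw [Finset.sum_congr rfl h2, Finset.sum_comm]
  refine Finset.sum_congr rfl fun t ht => ?_
  simp only [mem_range] at ht
  rw [← Finset.sum_filter]
  have : (range k).filter (fun n => n ≤ t) = range (t+1) := filter_le_range ht
  rw [this, ← Finset.mul_sum, ← Nat.cast_sum, sum_incr]
  rfl


theorem card_filter_val_lt {W n : ℕ} (h : n ≤ W) :
    ((univ : Finset (Fin W)).filter (fun i => i.val < n)).card = n := by
  rcases eq_or_lt_of_le h with h' | h'
  · subst h'
    have : (univ : Finset (Fin n)).filter (fun i => i.val < n) = univ := by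
      ext i; simp [i.isLt]
    rw [this, card_univ, Fintype.card_fin]
  · have : ((univ : Finset (Fin W)).filter (fun i => i.val < n)) = Finset.Iio ⟨n, h'⟩ := by
      ext i; simp [Finset.mem_Iio, Fin.lt_def]
    rw [this, Fin.card_Iio]

theorem rowDelay_decomp {m k : ℕ} (d : Fin k → ℝ) (hd0 : ∀ j, 0 ≤ d j) (hdanti : Antitone d)
    (A : Fin m → Fin k → Bool) (i : Fin m) :
    rowDelay d A i =
      ∑ t ∈ range k, dstep d t *
        (if ∃ j' : Fin k, j'.val ≤ t ∧ A i j' = true then (1:ℝ) else 0) := by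
  unfold rowDelay
  set S := Finset.univ.filter (fun j => A i j = true) with hS
  rcases S.eq_empty_or_nonempty with he | hne
  · rw [he, Finset.fold_empty]
    symm
    refine Finset.sum_eq_zero fun t _ => ?_
    have : ¬ ∃ j' : Fin k, j'.val ≤ t ∧ A i j' = true := by
      rintro ⟨j', _, hj'⟩
      have : j' ∈ S := by rw [hS]; simp [hj']
      simp [he] at this
    rw [if_neg this, mul_zero]
  · set j0 := S.min' hne with hj0
    have hj0S : j0 ∈ S := S.min'_mem hne
    have hfold : S.fold max 0 d = d j0 := by
      apply le_antisymm
      · rw [Finset.fold_max_le]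
        exact ⟨hd0 j0, fun x hx => hdanti (S.min'_le x hx)⟩
      · exact (Finset.le_fold_max _).mpr (Or.inr ⟨j0, hj0S, le_refl _⟩)
    rw [hfold]
    have hiff : ∀ t, (∃ j' : Fin k, j'.val ≤ t ∧ A i j' = true) ↔ j0.val ≤ t := by
      intro t
      constructor
      · rintro ⟨j', hj't, hj'⟩
        have : j' ∈ S := by rw [hS]; simp [hj']
        exact le_trans (S.min'_le j' this) hj't
      · intro ht
        refine ⟨j0, ht, ?_⟩
        have := hj0S
        rw [hS] at this; simpa using this
    calc d j0 = ∑ t ∈ Ico j0.val k, dstep d t := by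
          rw [sum_Ico_dstep d (le_of_lt j0.isLt), Dext_val]
      _ = ∑ t ∈ (range k).filter (fun t => j0.val ≤ t), dstep d t := by
          rw [filter_ge_range]
      _ = ∑ t ∈ range k, (if j0.val ≤ t then dstep d t else 0) := Finset.sum_filter _ _
      _ = _ := by
          refine Finset.sum_congr rfl fun t _ => ?_
          by_cases h : j0.val ≤ t
          · rw [if_pos h, if_pos ((hiff t).mpr h), mul_one]
          · rw [if_neg h, if_neg (fun hc => h ((hiff t).mp hc)), mul_zero]

theorem totalDelay_decomp {m k : ℕ} (d : Fin k → ℝ) (hd0 : ∀ j, 0 ≤ d j) (hdanti : Antitone d)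
    (A : Fin m → Fin k → Bool) :
    totalDelay d A =
      ∑ t ∈ range k, dstep d t *
        ((Finset.univ.filter
            (fun i : Fin m => ∃ j' : Fin k, j'.val ≤ t ∧ A i j' = true)).card : ℝ) := by
  unfold totalDelay
  rw [Finset.sum_congr rfl (fun i _ => rowDelay_decomp d hd0 hdanti A i), Finset.sum_comm]
  refine Finset.sum_congr rfl fun t _ => ?_
  rw [← Finset.mul_sum, Finset.sum_boole]


/-- the minimum of the total delay over all binary matrices (with any
number `m ≥ 1` of rows) whose `j`-th column contains at least `w j` ones equals
`∑ j, d j * max{0, w j - max{w j' : j' < j}}` (empty max = 0, i.e. `w 0 = 0`). -/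
theorem stmt3 (k : ℕ) (hk : 1 ≤ k)
    (d : Fin k → ℝ) (hd0 : ∀ j, 0 ≤ d j) (hdanti : Antitone d)
    (w : Fin k → ℕ) (hw : ∃ j, w j ≠ 0) :
    IsLeast
      {x : ℝ | ∃ (m : ℕ) (_ : 1 ≤ m) (A : Fin m → Fin k → Bool),
        (∀ j, w j ≤ colWeight A j) ∧ x = totalDelay d A}
      (∑ j : Fin k,
        d j * ((w j - (Finset.univ.filter (fun j' => j' < j)).sup w : ℕ) : ℝ)) := by
  have hsupCee : ∀ t : ℕ, t < k → ∃ n : ℕ, ∃ hnk : n < k, n ≤ t ∧ Cee w t = w ⟨n, hnk⟩ := by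
    intro t ht
    obtain ⟨n, hn, hsup⟩ :=
      Finset.exists_mem_eq_sup (range (t+1)) (Finset.nonempty_range_iff.mpr (Nat.succ_ne_zero t))
        (wext w)
    simp only [mem_range] at hn
    have hnt : n ≤ t := Nat.lt_succ_iff.mp hn
    have hnk : n < k := lt_of_le_of_lt hnt ht
    refine ⟨n, hnk, hnt, ?_⟩
    rw [show Cee w t = (range (t+1)).sup (wext w) from rfl, hsup]
    unfold wext; rw [dif_pos hnk]
  constructor
  · -- membership: the canonical matrix
    set W := (univ : Finset (Fin k)).sup w with hWdef
    obtain ⟨j1, hj1⟩ := hw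
    have hW1 : 1 ≤ W :=
      le_trans (Nat.one_le_iff_ne_zero.mpr hj1) (Finset.le_sup (mem_univ j1))
    refine ⟨W, hW1, fun i j => decide (i.val < w j), ?_, ?_⟩
    · intro j
      have hwj : w j ≤ W := Finset.le_sup (mem_univ j)
      unfold colWeight
      have he : (univ.filter (fun i : Fin W => (decide (i.val < w j)) = true))
          = univ.filter (fun i : Fin W => i.val < w j) := by
        ext i; simp
      rw [he, card_filter_val_lt hwj]
    · rw [target_eq, totalDelay_decomp d hd0 hdanti]
      refine Finset.sum_congr rfl fun t ht => ?_
      simp only [mem_range] at ht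
      congr 1
      obtain ⟨n, hnk, hnt, hCee⟩ := hsupCee t ht
      have hCW : Cee w t ≤ W := by rw [hCee]; exact Finset.le_sup (mem_univ _)
      have hpred : ∀ i : Fin W,
          (∃ j' : Fin k, j'.val ≤ t ∧ (decide (i.val < w j')) = true) ↔ i.val < Cee w t := by
        intro i
        constructor
        · rintro ⟨j', hj't, hj'⟩
          have hiw : i.val < w j' := by simpa using hj'
          have : w j' ≤ Cee w t := by
            have : wext w j'.val ≤ (range (t+1)).sup (wext w) :=
              Finset.le_sup (Finset.mem_range.mpr (Nat.lt_succ_iff.mpr hj't))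
            rw [show wext w j'.val = w j' from by unfold wext; rw [dif_pos j'.isLt]] at this
            exact this
          omega
        · intro hi
          exact ⟨⟨n, hnk⟩, hnt, by rw [hCee] at hi; simpa using hi⟩
      have he : (univ.filter
            (fun i : Fin W => ∃ j' : Fin k, j'.val ≤ t ∧ (decide (i.val < w j')) = true))
          = univ.filter (fun i : Fin W => i.val < Cee w t) := by
        ext i
        simp only [mem_filter, mem_univ, true_and]
        exact hpred i
      rw [he, card_filter_val_lt hCW]
  · -- lower bound
    rintro x ⟨m, hm, A, hA, rfl⟩
    rw [target_eq]
    rw [totalDelay_decomp d hd0 hdanti]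
    refine Finset.sum_le_sum fun t ht => ?_
    simp only [mem_range] at ht
    refine mul_le_mul_of_nonneg_left ?_ (dstep_nonneg hd0 hdanti t)
    have : Cee w t ≤
        (Finset.univ.filter
            (fun i : Fin m => ∃ j' : Fin k, j'.val ≤ t ∧ A i j' = true)).card := by
      obtain ⟨n, hnk, hnt, hCee⟩ := hsupCee t ht
      rw [hCee]
      refine le_trans (hA ⟨n, hnk⟩) ?_
      unfold colWeight
      apply Finset.card_le_card
      intro i hi
      simp only [mem_filter, mem_univ, true_and] at hi ⊢
      exact ⟨⟨n, hnk⟩, hnt, hi⟩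
    exact_mod_cast this
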